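/- Let P be the pullback in Cat of a cospan A → B ← C where f : C → B is an isofibration and A, B, C are each equivalent to discrete categories. Then P is equivalent to a discrete category. -/

import Mathlib

/-!
STATEMENT 9: Let P be the pullback in Cat of a cospan A → B ← C where f : C → B is an
isofibration and A, B, C are each equivalent to discrete categories. Then P is
equivalent to a discrete category.
-/

open CategoryTheory Limits

universe u v

/-- A functor is an isofibration if every isomorphism in the target whose source is in
the image of the functor lifts to an isomorphism in the source. -/
def IsIsofibration {C : Type u} {D : Type v} [Category C] [Category D] (F : C ⥤ D) : Prop :=
  ∀ (c : C) (d : D) (e : F.obj c ≅ d), ∃ (c' : C) (e' : c ≅ c') (h : F.obj c' = d),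
    F.mapIso e' ≪≫ eqToIso h = e

/-- A category is homotopically discrete if it is equivalent to a discrete category. -/
def HoDiscrete (C : Type u) [Category.{v} C] : Prop :=
  ∃ S : Type u, Nonempty (C ≌ Discrete S)

section Aux

/-- The setoid of "being isomorphic". -/
def isoSetoid (C : Type u) [Category.{v} C] : Setoid C where
  r X Y := Nonempty (X ≅ Y)
  iseqv := ⟨fun X => ⟨Iso.refl X⟩, fun ⟨e⟩ => ⟨e.symm⟩, fun ⟨e⟩ ⟨e'⟩ => ⟨e ≪≫ e'⟩⟩

/-- A thin groupoid is homotopically discrete. -/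
theorem hoDiscrete_of_thin_groupoid (C : Type u) [Category.{v} C]
    (hthin : ∀ X Y : C, Subsingleton (X ⟶ Y))
    (hgrpd : ∀ {X Y : C} (f : X ⟶ Y), IsIso f) : HoDiscrete C := by
  refine ⟨Quotient (isoSetoid C), ⟨?_⟩⟩
  let F : C ⥤ Discrete (Quotient (isoSetoid C)) :=
    { obj := fun X => ⟨Quotient.mk _ X⟩
      map := fun {X Y} f => by
        have := hgrpd f
        exact Discrete.eqToHom (Quotient.sound ⟨asIso f⟩)
      map_id := fun X => Subsingleton.elim _ _
      map_comp := fun f g => Subsingleton.elim _ _ }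
  haveI : F.Faithful := ⟨fun {X Y f g} _ => (hthin X Y).elim f g⟩
  haveI : F.Full := by
    constructor
    intro X Y φ
    have h : Nonempty (X ≅ Y) := Quotient.exact (Discrete.eq_of_hom φ)
    exact ⟨h.some.hom, Subsingleton.elim _ _⟩
  haveI : F.EssSurj := by
    constructor
    intro q
    obtain ⟨X, hX⟩ := Quotient.exists_rep q.as
    exact ⟨X, ⟨eqToIso (by simp [F, hX])⟩⟩
  haveI : F.IsEquivalence := {}
  exact F.asEquivalence

/-- A homotopically discrete category is thin. -/
theorem thin_of_hoDiscrete {C : Type u} [Category.{v} C] (h : HoDiscrete C)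
    (X Y : C) : Subsingleton (X ⟶ Y) := by
  obtain ⟨S, ⟨e⟩⟩ := h
  constructor
  intro f g
  apply e.functor.map_injective
  exact Subsingleton.elim _ _

/-- In a homotopically discrete category every morphism is an isomorphism. -/
theorem isIso_of_hoDiscrete {C : Type u} [Category.{v} C] (h : HoDiscrete C)
    {X Y : C} (f : X ⟶ Y) : IsIso f := by
  obtain ⟨S, ⟨e⟩⟩ := h
  haveI : IsIso (e.functor.map f) := inferInstance
  exact isIso_of_reflects_iso f e.functor

end Aux

section StrictPullback

variable (A B C : Cat.{u, u}) (g : A ⟶ B) (f : C ⟶ B)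

/-- The strict pullback category of a cospan of categories. -/
def StrictPB : Type u :=
  {p : ↥A × ↥C // g.toFunctor.obj p.1 = f.toFunctor.obj p.2}

instance StrictPBCategory : Category.{u} (StrictPB A B C g f) where
  Hom p q := {φ : (p.1.1 ⟶ q.1.1) × (p.1.2 ⟶ q.1.2) //
    g.toFunctor.map φ.1 = eqToHom p.2 ≫ f.toFunctor.map φ.2 ≫ eqToHom q.2.symm}
  id p := ⟨(𝟙 _, 𝟙 _), by simp⟩
  comp {p q r} φ ψ := ⟨(φ.1.1 ≫ ψ.1.1, φ.1.2 ≫ ψ.1.2), by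
    rw [Functor.map_comp, Functor.map_comp, φ.2, ψ.2]; simp⟩
  id_comp φ := by apply Subtype.ext; simp
  comp_id φ := by apply Subtype.ext; simp
  assoc φ ψ χ := by apply Subtype.ext; simp

/-- First projection of the strict pullback. -/
def pbFst : Cat.of (StrictPB A B C g f) ⟶ A where
  toFunctor := { obj := fun p => p.1.1, map := fun φ => φ.1.1 }

/-- Second projection of the strict pullback. -/
def pbSnd : Cat.of (StrictPB A B C g f) ⟶ C where
  toFunctor := { obj := fun p => p.1.2, map := fun φ => φ.1.2 }

theorem pb_condition : pbFst A B C g f ≫ g = pbSnd A B C g f ≫ f := by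
  apply Cat.Hom.ext
  fapply CategoryTheory.Functor.ext
  · intro p
    exact p.2
  · intro p q φ
    exact φ.2

theorem StrictPB_thin (hB : ∀ X Y : ↥B, Subsingleton (X ⟶ Y))
    (hA : ∀ X Y : ↥A, Subsingleton (X ⟶ Y))
    (hC : ∀ X Y : ↥C, Subsingleton (X ⟶ Y))
    (p q : StrictPB A B C g f) : Subsingleton (p ⟶ q) := by
  constructor
  intro φ ψ
  apply Subtype.ext
  have h1 := (hA p.1.1 q.1.1).elim φ.1.1 ψ.1.1
  have h2 := (hC p.1.2 q.1.2).elim φ.1.2 ψ.1.2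
  exact Prod.ext h1 h2

/-- The strict pullback cone is a limit cone. -/
noncomputable def pbIsLimit
    (hB : ∀ X Y : ↥B, Subsingleton (X ⟶ Y))
    (hA : ∀ X Y : ↥A, Subsingleton (X ⟶ Y))
    (hC : ∀ X Y : ↥C, Subsingleton (X ⟶ Y)) :
    IsLimit (PullbackCone.mk _ _ (pb_condition A B C g f)) := by
  fapply PullbackCone.IsLimit.mk
  · -- lift
    intro s
    exact Functor.toCatHom
      { obj := fun x => ⟨(s.fst.toFunctor.obj x, s.snd.toFunctor.obj x),
          Functor.congr_obj (congrArg Cat.Hom.toFunctor s.condition) x⟩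
        map := fun {x y} h => ⟨(s.fst.toFunctor.map h, s.snd.toFunctor.map h), (hB _ _).elim _ _⟩
        map_id := fun x => (StrictPB_thin A B C g f hB hA hC _ _).elim _ _
        map_comp := fun h k => (StrictPB_thin A B C g f hB hA hC _ _).elim _ _ }
  · -- fac_left
    intro s
    apply Cat.Hom.ext
    fapply CategoryTheory.Functor.ext
    · intro x; rfl
    · intro x y h
      exact ((hA _ _).elim _ _)
  · -- fac_right
    intro s
    apply Cat.Hom.ext
    fapply CategoryTheory.Functor.ext
    · intro x; rfl
    · intro x y h
      exact ((hC _ _).elim _ _)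
  · -- uniq
    intro s m hfst hsnd
    apply Cat.Hom.ext
    fapply CategoryTheory.Functor.ext
    · intro x
      apply Subtype.ext
      apply Prod.ext
      · exact Functor.congr_obj (congrArg Cat.Hom.toFunctor hfst) x
      · exact Functor.congr_obj (congrArg Cat.Hom.toFunctor hsnd) x
    · intro x y h
      exact (StrictPB_thin A B C g f hB hA hC _ _).elim _ _

end StrictPullback

theorem pullback_of_hoDiscrete_along_isofibration_hoDiscrete
    (A B C : Cat.{u, u}) (g : A ⟶ B) (f : C ⟶ B)
    (hfib : IsIsofibration (f.toFunctor : ↥C ⥤ ↥B))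
    (hA : HoDiscrete ↥A) (hB : HoDiscrete ↥B) (hC : HoDiscrete ↥C) :
    HoDiscrete ↥(pullback g f) := by
  have thA := thin_of_hoDiscrete hA
  have thB := thin_of_hoDiscrete hB
  have thC := thin_of_hoDiscrete hC
  -- the chosen pullback is isomorphic (in Cat) to the strict pullback
  have hiso : pullback g f ≅ Cat.of (StrictPB A B C g f) :=
    limit.isoLimitCone ⟨_, pbIsLimit A B C g f thB thA thC⟩
  have e1 : ↥(pullback g f) ≌ StrictPB A B C g f := Cat.equivOfIso hiso
  -- the strict pullback is a thin groupoid
  have hPB : HoDiscrete (StrictPB A B C g f) := by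
    apply hoDiscrete_of_thin_groupoid
    · exact StrictPB_thin A B C g f thB thA thC
    · intro p q φ
      haveI := isIso_of_hoDiscrete hA φ.1.1
      haveI := isIso_of_hoDiscrete hC φ.1.2
      refine ⟨⟨(inv φ.1.1, inv φ.1.2), (thB _ _).elim _ _⟩, ?_, ?_⟩
      · exact (StrictPB_thin A B C g f thB thA thC p p).elim _ _
      · exact (StrictPB_thin A B C g f thB thA thC q q).elim _ _
  obtain ⟨S, ⟨e2⟩⟩ := hPB
  exact ⟨S, ⟨e1.trans e2⟩⟩
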